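/- Matrix Form of the 2D Multi-Filter Convolution (Lemma B.23): Let M, C, D be powers of two with D ≤ M. Let X be a rank-3 tensor with entries X_{i,k,j} for i ∈ [C], j,k ∈ [M], vectorized as |X⟩ := Σ_{i∈[C]} Σ_{j∈[M]} Σ_{k∈[M]} X_{i,k,j} |i⟩_C ⊗ |j⟩_M ⊗ |k⟩_M ∈ ℂ^{CM²}, and let X̃_{i,j,k} := X_{i,j,k} when j ≥ 0 and k ≥ 0 and X̃_{i,j,k} := 0 otherwise. Let K be a rank-4 kernel tensor with entries K_{i,j,k,l} for i,j ∈ [C], k,l ∈ [D], and define the multi-filter 2D convolution output [X ∗ K]_{x,y,z} := Σ_{j∈[C]} Σ_{k∈[D]} Σ_{l∈[D]} K_{x,j,k,l} X̃_{j, z−k, y−l}. Let Q := Σ_{j=0}^{M−2} |j+1⟩⟨j| be the M×M discrete unilateral shift matrix and define 𝒞 := Σ_{i∈[C]} Σ_{j∈[C]} Σ_{k∈[D]} Σ_{l∈[D]} K_{i,j,k,l} (|i⟩⟨j| ⊗ Q^l ⊗ Q^k), a CM² × CM² matrix. Then for all x ∈ [C] and y,z ∈ [M], (⟨x| ⊗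 ⟨y| ⊗ ⟨z|) 𝒞 |X⟩ = [X ∗ K]_{x,y,z}; i.e. 𝒞|X⟩ is the vectorization of X ∗ K. -/

import Mathlib

open scoped Kronecker Matrix

noncomputable section

/-- Reinterpret a plain function as an element of `EuclideanSpace`. -/
def toEuc {𝕜 : Type*} [RCLike 𝕜] {ι : Type*} (v : ι → 𝕜) : EuclideanSpace 𝕜 ι := WithLp.toLp 2 v

/-- The zero-padded extension `X̃` of the input tensor `X` to integer indices:
`X̃_{i,u,v} = X_{i,u,v}` for valid indices `u, v ≥ 0` and `0` otherwise. -/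
def Xtil {C M : ℕ} (X : Fin C → Fin M → Fin M → ℂ) (i : Fin C) (u v : ℤ) : ℂ :=
  if h : 0 ≤ u ∧ 0 ≤ v ∧ u < (M : ℤ) ∧ v < (M : ℤ) then
    X i ⟨u.toNat, by omega⟩ ⟨v.toNat, by omega⟩
  else 0

lemma Qpow_apply {M : ℕ} (n : ℕ) (i j : Fin M) :
    ((Matrix.of fun i j : Fin M => if (i:ℕ) = (j:ℕ)+1 then (1:ℂ) else 0) ^ n) i j
      = if (i:ℕ) = (j:ℕ) + n then 1 else 0 := by
  induction n generalizing i j with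
  | zero =>
    simp [Matrix.one_apply, Fin.ext_iff]
  | succ n ih =>
    rw [pow_succ, Matrix.mul_apply]
    simp only [ih, Matrix.of_apply]
    by_cases h : (j:ℕ)+1 < M
    · rw [Finset.sum_eq_single (⟨(j:ℕ)+1, h⟩ : Fin M)]
      · have : (j:ℕ) + 1 + n = (j:ℕ) + n + 1 := by omega
        simp [this, ← add_assoc]
      · intro t _ ht
        have : ¬ (t:ℕ) = (j:ℕ)+1 := fun hc => ht (Fin.ext hc)
        simp [this, ← add_assoc]
      · simp
    · have h1 : ∀ t : Fin M, ¬ (t:ℕ) = (j:ℕ)+1 := fun t => by have := t.isLt; omega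
      have h2 : ¬ (i:ℕ) = (j:ℕ) + (n+1) := by have := i.isLt; omega
      simp [h1, h2]

lemma key {C M : ℕ} (X : Fin C → Fin M → Fin M → ℂ) (j : Fin C) (y z : Fin M) (k l : ℕ) :
    (∑ v : Fin M, ∑ u : Fin M,
      (if (y:ℕ) = (v:ℕ) + l then (1:ℂ) else 0) *
        ((if (z:ℕ) = (u:ℕ) + k then (1:ℂ) else 0) * X j u v))
      = Xtil X j (((z:ℕ):ℤ) - (k:ℤ)) (((y:ℕ):ℤ) - (l:ℤ)) := by
  by_cases hl : l ≤ (y:ℕ)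
  · by_cases hk : k ≤ (z:ℕ)
    · have hv : (y:ℕ) - l < M := by have := y.isLt; omega
      have hu : (z:ℕ) - k < M := by have := z.isLt; omega
      rw [Finset.sum_eq_single (⟨(y:ℕ) - l, hv⟩ : Fin M)]
      · rw [Finset.sum_eq_single (⟨(z:ℕ) - k, hu⟩ : Fin M)]
        · have h1 : (y:ℕ) = ((y:ℕ) - l) + l := by omega
          have h2 : (z:ℕ) = ((z:ℕ) - k) + k := by omega
          rw [if_pos, if_pos, Xtil, dif_pos]
          · rw [one_mul, one_mul]
            congr 1 <;> exact Fin.ext (by simp)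
          · constructor
            · omega
            · refine ⟨by omega, by omega, by omega⟩
          · exact h2
          · exact h1
        · intro u _ hu'
          have : ¬ (z:ℕ) = (u:ℕ) + k := by
            intro hc; apply hu'; apply Fin.ext; simp; omega
          simp [this]
        · simp
      · intro v _ hv'
        have : ¬ (y:ℕ) = (v:ℕ) + l := by
          intro hc; apply hv'; apply Fin.ext; simp; omega
        simp [this]
      · simp
    · have h1 : ∀ u : Fin M, ¬ (z:ℕ) = (u:ℕ) + k := by intro u; omega
      have h2 : ¬ (0 ≤ ((z:ℕ):ℤ) - (k:ℤ) ∧ 0 ≤ ((y:ℕ):ℤ) - (l:ℤ) ∧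
          ((z:ℕ):ℤ) - (k:ℤ) < (M:ℤ) ∧ ((y:ℕ):ℤ) - (l:ℤ) < (M:ℤ)) := by omega
      rw [Xtil, dif_neg h2]
      simp [h1]
  · have h1 : ∀ v : Fin M, ¬ (y:ℕ) = (v:ℕ) + l := by intro v; omega
    have h2 : ¬ (0 ≤ ((z:ℕ):ℤ) - (k:ℤ) ∧ 0 ≤ ((y:ℕ):ℤ) - (l:ℤ) ∧
        ((z:ℕ):ℤ) - (k:ℤ) < (M:ℤ) ∧ ((y:ℕ):ℤ) - (l:ℤ) < (M:ℤ)) := by omega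
    rw [Xtil, dif_neg h2]
    simp [h1]

/-- **Matrix form of the 2D multi-filter convolution** (Lemma B.23).
With `Q` the `M × M` unilateral shift and
`𝒞 = Σ_{i,j,k,l} K_{i,j,k,l} (|i⟩⟨j| ⊗ Q^l ⊗ Q^k)`, the matrix `𝒞` applied to the
vectorization `|X⟩ = Σ X_{i,k,j} |i⟩|j⟩|k⟩` computes the multi-filter 2D convolution:
`(⟨x| ⊗ ⟨y| ⊗ ⟨z|) 𝒞 |X⟩ = Σ_{j,k,l} K_{x,j,k,l} X̃_{j, z-k, y-l}`. -/
theorem matrix_form_of_2d_convolution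
    (mm cc dd : ℕ) (hDM : (2:ℕ)^dd ≤ 2^mm)
    (X : Fin (2^cc) → Fin (2^mm) → Fin (2^mm) → ℂ)
    (K : Fin (2^cc) → Fin (2^cc) → Fin (2^dd) → Fin (2^dd) → ℂ)
    (Q : Matrix (Fin (2^mm)) (Fin (2^mm)) ℂ)
    (hQ : Q = Matrix.of fun i j : Fin (2^mm) => if (i : ℕ) = (j : ℕ) + 1 then 1 else 0)
    (Cmat : Matrix (Fin (2^cc) × (Fin (2^mm) × Fin (2^mm)))
        (Fin (2^cc) × (Fin (2^mm) × Fin (2^mm))) ℂ)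
    (hC : Cmat = ∑ i : Fin (2^cc), ∑ j : Fin (2^cc), ∑ k : Fin (2^dd), ∑ l : Fin (2^dd),
        K i j k l • (Matrix.single i j (1 : ℂ) ⊗ₖ ((Q ^ (l : ℕ)) ⊗ₖ (Q ^ (k : ℕ)))))
    (vecX : EuclideanSpace ℂ (Fin (2^cc) × (Fin (2^mm) × Fin (2^mm))))
    (hvecX : vecX = toEuc fun p => X p.1 p.2.2 p.2.1) :
    ∀ (x : Fin (2^cc)) (y z : Fin (2^mm)),
      Cmat.mulVec vecX (x, (y, z))
        = ∑ j : Fin (2^cc), ∑ k : Fin (2^dd), ∑ l : Fin (2^dd),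
            K x j k l * Xtil X j (((z : ℕ) : ℤ) - ((k : ℕ) : ℤ))
              (((y : ℕ) : ℤ) - ((l : ℕ) : ℤ)) := by
  subst hQ hC hvecX
  intro x y z
  simp only [Matrix.mulVec, dotProduct, Matrix.sum_apply, Matrix.smul_apply,
    Matrix.kroneckerMap_apply, Matrix.single, Matrix.of_apply, Qpow_apply,
    toEuc, PiLp.toLp_apply, smul_eq_mul]
  simp only [Finset.sum_mul]
  rw [Finset.sum_comm]
  rw [Finset.sum_eq_single x]
  · rw [Finset.sum_comm]
    refine Finset.sum_congr rfl fun j _ => ?_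
    rw [Finset.sum_comm]
    refine Finset.sum_congr rfl fun k _ => ?_
    rw [Finset.sum_comm]
    refine Finset.sum_congr rfl fun l _ => ?_
    rw [Fintype.sum_prod_type, Finset.sum_eq_single j]
    · rw [← key X j y z k l, Fintype.sum_prod_type, Finset.mul_sum]
      refine Finset.sum_congr rfl fun v _ => ?_
      rw [Finset.mul_sum]
      refine Finset.sum_congr rfl fun u _ => ?_
      simp only [and_self, if_true, one_mul]
      ring
    · intro b _ hb
      have : j ≠ b := Ne.symm hb
      simp [this]
    · simp
  · intro i _ hi
    simp [hi]
  · simp
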